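/- Let μ, ν be finite monotone measures such that (μ,ν) has the decomposition property w.r.t. {A_α}_{α∈ℚ≥0} with lim_{α→∞} max(μ(A_α), ν(A_α)) = 0. Then μ is absolutely continuous with respect to ν: ν(A) = 0 implies μ(A) = 0 for all measurable A. -/

import Mathlib

open MeasureTheory Filter Set
open scoped NNReal ENNReal NNRat

variable {U : Type*}

/-- The Choquet integral of `f` w.r.t. the set function `ν` on the set `A`:
`∫₀^∞ ν({f ≥ t} ∩ A) dt`. -/
noncomputable def Choquet [MeasurableSpace U] (ν : Set U → ENNReal) (f : U → ENNReal)
    (A : Set U) : ENNReal :=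
  ∫⁻ t in Set.Ioi (0 : ℝ), ν ({x | ENNReal.ofReal t ≤ f x} ∩ A)

/-- A monotone measure: vanishes at `∅` and is monotone on measurable sets. -/
def IsMonotoneMeasure [MeasurableSpace U] (ν : Set U → ENNReal) : Prop :=
  ν ∅ = 0 ∧ ∀ A B : Set U, MeasurableSet A → MeasurableSet B → A ⊆ B → ν A ≤ ν B

/-- The decomposition inequalities for the ordered pair `(μ, ν)` w.r.t. a family
`A : NNRat → Set U`, stated additively (no truncated subtraction):
`α(ν(S∩A_α) − ν(S∩A_β)) ≤ μ(S∩A_α) − μ(S∩A_β) ≤ β(ν(S∩A_α) − ν(S∩A_β))`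
for all measurable `S` of finite `μ`- and `ν`-measure and rationals `α < β`. -/
def DecompIneq [MeasurableSpace U] (μ ν : Set U → ENNReal) (A : NNRat → Set U) : Prop :=
  ∀ S : Set U, MeasurableSet S → μ S ≠ ⊤ → ν S ≠ ⊤ →
    ∀ α β : NNRat, α < β →
      (((α : ℝ≥0) : ENNReal) * ν (S ∩ A α) + μ (S ∩ A β)
          ≤ μ (S ∩ A α) + ((α : ℝ≥0) : ENNReal) * ν (S ∩ A β)) ∧
      (μ (S ∩ A α) + ((β : ℝ≥0) : ENNReal) * ν (S ∩ A β)
          ≤ ((β : ℝ≥0) : ENNReal) * ν (S ∩ A α) + μ (S ∩ A β))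

/-- The decomposition property: a decreasing family of measurable sets with `A 0 = univ`
satisfying the decomposition inequalities. -/
def DecompProp [MeasurableSpace U] (μ ν : Set U → ENNReal) (A : NNRat → Set U) : Prop :=
  (∀ α, MeasurableSet (A α)) ∧ A 0 = Set.univ ∧ Antitone A ∧ DecompIneq μ ν A

/-- Comonotonicity for `ℝ≥0∞`-valued functions. -/
def Comonotone (f g : U → ENNReal) : Prop :=
  ∀ s t : U, (f s ≤ f t ∧ g s ≤ g t) ∨ (f t ≤ f s ∧ g t ≤ g s)

theorem decomp_implies_abs_continuous [MeasurableSpace U] (μ ν : Set U → ENNReal)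
    (hμ : IsMonotoneMeasure μ) (hν : IsMonotoneMeasure ν)
    (hμfin : μ Set.univ ≠ ⊤) (hνfin : ν Set.univ ≠ ⊤)
    (A : NNRat → Set U) (hd : DecompProp μ ν A)
    (ht : Tendsto (fun α : NNRat => max (μ (A α)) (ν (A α))) atTop (nhds 0)) :
    ∀ S : Set U, MeasurableSet S → ν S = 0 → μ S = 0 := by
  intro S hS hνS
  obtain ⟨hAmeas, hA0, hAanti, hdi⟩ := hd
  have hμS : μ S ≠ ⊤ := fun h =>
    hμfin (top_le_iff.mp (h ▸ hμ.2 S univ hS MeasurableSet.univ (subset_univ S)))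
  have key : ∀ β : NNRat, 0 < β → μ S ≤ μ (A β) := by
    intro β hβ
    have h := (hdi S hS hμS (hνS ▸ ENNReal.zero_ne_top) 0 β hβ).2
    have hν0 : ν (S ∩ A 0) = 0 := by rw [hA0, inter_univ]; exact hνS
    have hνβ : ν (S ∩ A β) = 0 := by
      refine le_antisymm ?_ zero_le
      calc ν (S ∩ A β) ≤ ν S := hν.2 _ _ (hS.inter (hAmeas β)) hS inter_subset_left
        _ = 0 := hνS
    rw [hν0, hνβ] at h
    simp only [mul_zero, add_zero, zero_add] at h
    rw [hA0, inter_univ] at h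
    exact h.trans (hμ.2 _ _ (hS.inter (hAmeas β)) (hAmeas β) inter_subset_right)
  have hle : μ S ≤ 0 := by
    refine ge_of_tendsto ht ?_
    filter_upwards [eventually_ge_atTop (1 : NNRat)] with β hβ
    exact (key β (lt_of_lt_of_le one_pos hβ)).trans (le_max_left _ _)
  exact le_antisymm hle zero_le
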